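/- Let U ⊆ ℂ be open and let v, u : U → ℂ be differentiable functions with v(t) ≠ 0 for all t ∈ U, satisfying system (6) on U. Define x(t) := 1/v(t)² and y(t) := −2/v(t)³ − (t/2)v(t) − (1/2)v(t)² + u(t)v(t)³. Then x and y are differentiable on U and satisfy the Painlevé I Hamiltonian system dx/dt = y, dy/dt = 6x² + t on U. -/

import Mathlib

lemma hasDerivAt_of_sys
    (v u : ℂ → ℂ) (t : ℂ)
    (hv : DifferentiableAt ℂ v t) (hu : DifferentiableAt ℂ u t)
    (hs1 : deriv v t =
      1 + (t / 4) * (v t) ^ 4 + (1 / 4) * (v t) ^ 5 - (1 / 2) * (v t) ^ 6 * u t)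
    (hs2 : deriv u t =
      (1 / 8) * t ^ 2 * v t + (3 / 8) * t * (v t) ^ 2 - (t * u t - 1 / 4) * (v t) ^ 3
        - (5 / 4) * (v t) ^ 4 * u t + (3 / 2) * (v t) ^ 5 * (u t) ^ 2) :
    HasDerivAt v (1 + (t / 4) * (v t) ^ 4 + (1 / 4) * (v t) ^ 5 - (1 / 2) * (v t) ^ 6 * u t) t ∧
    HasDerivAt u ((1 / 8) * t ^ 2 * v t + (3 / 8) * t * (v t) ^ 2 - (t * u t - 1 / 4) * (v t) ^ 3
        - (5 / 4) * (v t) ^ 4 * u t + (3 / 2) * (v t) ^ 5 * (u t) ^ 2) t := by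
  constructor
  · simpa [hs1] using hv.hasDerivAt
  · simpa [hs2] using hu.hasDerivAt

set_option maxHeartbeats 1000000 in
lemma painleve_alg_aux (t V W : ℂ) (hV : V ≠ 0) :
    6 * (1 / V ^ 2) ^ 2 + t =
      -(3 * V ^ 2 * (1 + (t / 4) * V ^ 4 + (1 / 4) * V ^ 5 - (1 / 2) * V ^ 6 * W)) / (V ^ 3) ^ 2 * (-2)
        - ((1 / 2) * V + (t / 2) * (1 + (t / 4) * V ^ 4 + (1 / 4) * V ^ 5 - (1 / 2) * V ^ 6 * W))
        - (1 / 2) * (2 * V ^ 1 * (1 + (t / 4) * V ^ 4 + (1 / 4) * V ^ 5 - (1 / 2) * V ^ 6 * W))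
        + (((1 / 8) * t ^ 2 * V + (3 / 8) * t * V ^ 2 - (t * W - 1 / 4) * V ^ 3
            - (5 / 4) * V ^ 4 * W + (3 / 2) * V ^ 5 * W ^ 2) * V ^ 3
          + W * (3 * V ^ 2 * (1 + (t / 4) * V ^ 4 + (1 / 4) * V ^ 5 - (1 / 2) * V ^ 6 * W))) := by
  have h6 : V ^ 6 ≠ 0 := pow_ne_zero 6 hV
  field_simp
  ring_nf

set_option maxHeartbeats 1000000 in
/-- The algebraic transformation x = 1/v², y = −2/v³ − (t/2)v − v²/2 + uv³ takes
solutions of system (6) to solutions of the Painlevé I Hamiltonian system (3). -/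
theorem double_covering_to_painleveI
    (U : Set ℂ) (hU : IsOpen U) (v u : ℂ → ℂ)
    (hv : ∀ t ∈ U, DifferentiableAt ℂ v t) (hu : ∀ t ∈ U, DifferentiableAt ℂ u t)
    (hvne : ∀ t ∈ U, v t ≠ 0)
    (hsys1 : ∀ t ∈ U, deriv v t =
      1 + (t / 4) * (v t) ^ 4 + (1 / 4) * (v t) ^ 5 - (1 / 2) * (v t) ^ 6 * u t)
    (hsys2 : ∀ t ∈ U, deriv u t =
      (1 / 8) * t ^ 2 * v t + (3 / 8) * t * (v t) ^ 2 - (t * u t - 1 / 4) * (v t) ^ 3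
        - (5 / 4) * (v t) ^ 4 * u t + (3 / 2) * (v t) ^ 5 * (u t) ^ 2)
    (x y : ℂ → ℂ)
    (hx : ∀ t, x t = 1 / (v t) ^ 2)
    (hy : ∀ t, y t = -2 / (v t) ^ 3 - (t / 2) * v t - (1 / 2) * (v t) ^ 2 + u t * (v t) ^ 3) :
    (∀ t ∈ U, DifferentiableAt ℂ x t) ∧ (∀ t ∈ U, DifferentiableAt ℂ y t) ∧
    (∀ t ∈ U, deriv x t = y t) ∧ (∀ t ∈ U, deriv y t = 6 * (x t) ^ 2 + t) := by
  have hxf : x = fun s => 1 / (v s) ^ 2 := funext hx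
  have hyf : y = fun s => -2 / (v s) ^ 3 - (s / 2) * v s - (1 / 2) * (v s) ^ 2 + u s * (v s) ^ 3 :=
    funext hy
  -- derivative facts at each point of U
  have key : ∀ t ∈ U,
      HasDerivAt x (y t) t ∧ HasDerivAt y (6 * (x t) ^ 2 + t) t := by
    intro t ht
    obtain ⟨hV, hUd⟩ := hasDerivAt_of_sys v u t (hv t ht) (hu t ht) (hsys1 t ht) (hsys2 t ht)
    set dv := 1 + (t / 4) * (v t) ^ 4 + (1 / 4) * (v t) ^ 5 - (1 / 2) * (v t) ^ 6 * u t with hdv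
    set du := (1 / 8) * t ^ 2 * v t + (3 / 8) * t * (v t) ^ 2 - (t * u t - 1 / 4) * (v t) ^ 3
        - (5 / 4) * (v t) ^ 4 * u t + (3 / 2) * (v t) ^ 5 * (u t) ^ 2 with hdu
    have hne := hvne t ht
    have h2 : (v t) ^ 2 ≠ 0 := pow_ne_zero 2 hne
    have h3 : (v t) ^ 3 ≠ 0 := pow_ne_zero 3 hne
    have hX : HasDerivAt x (-(2 * v t ^ 1 * dv) / ((v t) ^ 2) ^ 2) t := by
      rw [hxf]
      simpa using ((hV.fun_pow 2).fun_inv h2)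
    have hYd : HasDerivAt y
        (-(3 * v t ^ 2 * dv) / ((v t) ^ 3) ^ 2 * (-2)
          - ((1 / 2) * v t + (t / 2) * dv)
          - (1 / 2) * (2 * v t ^ 1 * dv)
          + (du * (v t) ^ 3 + u t * (3 * v t ^ 2 * dv))) t := by
      rw [hyf]
      have hA : HasDerivAt (fun s => -2 / (v s) ^ 3)
          (-(3 * v t ^ 2 * dv) / ((v t) ^ 3) ^ 2 * (-2)) t := by
        have := ((hV.pow 3).inv h3).const_mul (-2 : ℂ)
        simpa [div_eq_mul_inv, mul_comm] using this
      have hB : HasDerivAt (fun s => (s / 2) * v s)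
          ((1 / 2) * v t + (t / 2) * dv) t := by
        have hid : HasDerivAt (fun s : ℂ => s / 2) (1 / 2) t := by
          simpa using (hasDerivAt_id t).div_const 2
        simpa using hid.fun_mul hV
      have hC : HasDerivAt (fun s => (1 / 2) * (v s) ^ 2)
          ((1 / 2) * (2 * v t ^ 1 * dv)) t := (hV.pow 2).const_mul _
      have hD : HasDerivAt (fun s => u s * (v s) ^ 3)
          (du * (v t) ^ 3 + u t * (3 * v t ^ 2 * dv)) t := hUd.mul (hV.pow 3)
      exact ((hA.sub hB).sub hC).add hD
    constructor
    · convert hX using 1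
      rw [hy]
      field_simp
      ring
    · convert hYd using 1
      rw [hx, hdv, hdu]
      exact painleve_alg_aux t (v t) (u t) hne
  refine ⟨fun t ht => (key t ht).1.differentiableAt,
    fun t ht => (key t ht).2.differentiableAt,
    fun t ht => (key t ht).1.deriv,
    fun t ht => (key t ht).2.deriv⟩
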